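/- arXiv:2403.07431 — 2 statements merged into one kernel-verified Lean document; each statement's English description precedes it below -/
import Mathlib

section
/- Let P_k* and P_0^s be orthogonal projections of ranks r_k and r_s respectively with r_s ≤ r_k, and suppose P_k* = P_k^s + P_k^p where P_k^s, P_k^p are orthogonal projections with P_k^s P_k^p = 0 and ‖P_k^s - P_0^s‖_F ≤ h. Then the quantity d_k := r_s - tr(P_k* P_0^s) satisfies 0 ≤ d_k ≤ h²/2 + h·√(2 r_s). -/
open Matrix BigOperators

noncomputable def frob {m n : ℕ} (A : Matrix (Fin m) (Fin n) ℝ) : ℝ :=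
  Real.sqrt (∑ i, ∑ j, (A i j)^2)

noncomputable def opNorm {p : ℕ} (A : Matrix (Fin p) (Fin p) ℝ) : ℝ :=
  ‖Matrix.toEuclideanCLM (𝕜 := ℝ) A‖

/-- trace of a real idempotent matrix equals its rank -/
lemma trace_eq_rank_of_idem {p : ℕ} (A : Matrix (Fin p) (Fin p) ℝ)
    (hIdem : A * A = A) : A.trace = (A.rank : ℝ) := by
  have hlin : (Matrix.mulVecLin A) ∘ₗ (Matrix.mulVecLin A) = Matrix.mulVecLin A := by
    rw [← Matrix.mulVecLin_mul, hIdem]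
  obtain ⟨q, hq⟩ := (LinearMap.isProj_iff_isIdempotentElem (Matrix.mulVecLin A)).mpr hlin
  have hrange : q = LinearMap.range (Matrix.mulVecLin A) := by
    apply le_antisymm
    · intro x hx
      exact ⟨x, hq.2 x hx⟩
    · rintro x ⟨y, rfl⟩
      exact hq.1 y
  have htr := hq.trace
  have hmat : LinearMap.trace ℝ (Fin p → ℝ) (Matrix.mulVecLin A) = A.trace := by
    rw [LinearMap.trace_eq_matrix_trace ℝ (Pi.basisFun ℝ (Fin p))]
    congr 1
    ext i j
    simp [LinearMap.toMatrix, Matrix.mulVecLin, Matrix.mulVec, dotProduct,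
      Pi.basisFun_apply, Matrix.toLin'_apply]
  rw [← hmat, htr, hrange]
  rfl

/-- tr(AᵀA) ≥ 0 trivially, key: for symmetric idempotent A, B:
    tr(A*B) = tr((A*B)ᵀ*(A*B)) style positivity. -/
lemma trace_mul_nonneg_of_projs {p : ℕ} (A B : Matrix (Fin p) (Fin p) ℝ)
    (hA : A.IsSymm) (hAI : A * A = A) (hB : B.IsSymm) (hBI : B * B = B) :
    0 ≤ (A * B).trace := by
  have e : (A * B)ᵀ * (A * B) = B * (A * B) := by
    rw [Matrix.transpose_mul, hB.eq, hA.eq, mul_assoc, ← mul_assoc A A B, hAI]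
  have key : (A * B).trace = ((A * B)ᵀ * (A * B)).trace := by
    rw [e, Matrix.trace_mul_comm B (A * B), mul_assoc, hBI]
  rw [key]
  have : ∀ i j, (A * B) i j = ((A * B)ᵀ) j i := fun i j => rfl
  rw [Matrix.trace]
  apply Finset.sum_nonneg
  intro i _
  simp only [Matrix.diag_apply, Matrix.mul_apply, Matrix.transpose_apply]
  exact Finset.sum_nonneg fun j _ => mul_self_nonneg _

/-- Informative level bound: with P_k* = P_k^s + P_k^p, P_k^s P_k^p = 0 and
‖P_k^s - P_0^s‖_F ≤ h, the quantity d_k = r_s - tr(P_k* P_0^s) satisfies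
0 ≤ d_k ≤ h²/2 + h√(2 r_s). -/
theorem stmt6 {p : ℕ} (rs rk : ℕ) (h : ℝ) (hh : 0 ≤ h)
    (Pkstar Pks Pkp P0s : Matrix (Fin p) (Fin p) ℝ)
    (hPks : Pks.IsSymm) (hPksIdem : Pks * Pks = Pks) (hPksRank : Pks.rank = rs)
    (hPkp : Pkp.IsSymm) (hPkpIdem : Pkp * Pkp = Pkp) (hPkpRank : Pkp.rank = rk - rs)
    (hP0s : P0s.IsSymm) (hP0sIdem : P0s * P0s = P0s) (hP0sRank : P0s.rank = rs)
    (hdecomp : Pkstar = Pks + Pkp) (hOrth : Pks * Pkp = 0)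
    (hrs : rs ≤ rk)
    (hclose : frob (Pks - P0s) ≤ h) :
    0 ≤ (rs : ℝ) - (Pkstar * P0s).trace ∧
    (rs : ℝ) - (Pkstar * P0s).trace ≤ h^2 / 2 + h * Real.sqrt (2 * rs) := by
  -- traces of the projections
  have htrPks : Pks.trace = (rs : ℝ) := by
    rw [trace_eq_rank_of_idem Pks hPksIdem, hPksRank]
  have htrP0s : P0s.trace = (rs : ℝ) := by
    rw [trace_eq_rank_of_idem P0s hP0sIdem, hP0sRank]
  -- Pkstar is a symmetric idempotent
  have hPkpPks : Pkp * Pks = 0 := by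
    have := congrArg Matrix.transpose hOrth
    rwa [Matrix.transpose_mul, hPks.eq, hPkp.eq, Matrix.transpose_zero] at this
  have hstarSymm : Pkstar.IsSymm := by
    rw [hdecomp]; exact hPks.add hPkp
  have hstarIdem : Pkstar * Pkstar = Pkstar := by
    rw [hdecomp]
    calc (Pks + Pkp) * (Pks + Pkp)
        = Pks * Pks + Pks * Pkp + (Pkp * Pks + Pkp * Pkp) := by noncomm_ring
      _ = Pks + Pkp := by rw [hPksIdem, hPkpIdem, hOrth, hPkpPks]; abel
  -- frob squared identity
  have hfrobsq : (frob (Pks - P0s))^2 = ((Pks - P0s)ᵀ * (Pks - P0s)).trace := by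
    rw [frob, Real.sq_sqrt]
    · rw [Matrix.trace]
      rw [Finset.sum_comm]
      apply Finset.sum_congr rfl
      intro i _
      simp only [Matrix.diag_apply, Matrix.mul_apply, Matrix.transpose_apply, sq]
    · apply Finset.sum_nonneg; intro i _
      apply Finset.sum_nonneg; intro j _
      exact sq_nonneg _
  have hexp : ((Pks - P0s)ᵀ * (Pks - P0s)).trace
      = 2 * (rs : ℝ) - 2 * (Pks * P0s).trace := by
    have hsym : (Pks - P0s)ᵀ = Pks - P0s := by
      rw [Matrix.transpose_sub, hPks.eq, hP0s.eq]
    rw [hsym]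
    have : (Pks - P0s) * (Pks - P0s)
        = Pks * Pks - Pks * P0s - P0s * Pks + P0s * P0s := by noncomm_ring
    rw [this, hPksIdem, hP0sIdem]
    have hc : (P0s * Pks).trace = (Pks * P0s).trace := Matrix.trace_mul_comm _ _
    simp only [Matrix.trace_add, Matrix.trace_sub, htrPks, htrP0s, hc]
    ring
  constructor
  · -- lower bound: rs - tr(Pk* P0s) = tr((1 - Pk*) P0s) ≥ 0
    have hQsymm : (1 - Pkstar).IsSymm := by
      rw [Matrix.IsSymm, Matrix.transpose_sub, Matrix.transpose_one, hstarSymm.eq]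
    have hQidem : (1 - Pkstar) * (1 - Pkstar) = 1 - Pkstar := by
      have : (1 - Pkstar) * (1 - Pkstar) = 1 - Pkstar - Pkstar + Pkstar * Pkstar := by
        simp only [Matrix.sub_mul, Matrix.mul_sub, one_mul, mul_one]
        abel
      rw [this, hstarIdem]; abel
    have hpos := trace_mul_nonneg_of_projs (1 - Pkstar) P0s hQsymm hQidem hP0s hP0sIdem
    have : ((1 - Pkstar) * P0s).trace = (rs : ℝ) - (Pkstar * P0s).trace := by
      have : (1 - Pkstar) * P0s = P0s - Pkstar * P0s := by noncomm_ring
      rw [this, Matrix.trace_sub, htrP0s]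
    linarith
  · -- upper bound
    have hsplit : (Pkstar * P0s).trace = (Pks * P0s).trace + (Pkp * P0s).trace := by
      rw [hdecomp, Matrix.add_mul, Matrix.trace_add]
    have hpos := trace_mul_nonneg_of_projs Pkp P0s hPkp hPkpIdem hP0s hP0sIdem
    have hfb : (frob (Pks - P0s))^2 ≤ h^2 := by
      have hfnn : 0 ≤ frob (Pks - P0s) := Real.sqrt_nonneg _
      nlinarith
    have h1 : (rs : ℝ) - (Pks * P0s).trace ≤ h^2 / 2 := by
      have := hfrobsq.trans hexp
      nlinarith
    have h2 : 0 ≤ h * Real.sqrt (2 * rs) :=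
      mul_nonneg hh (Real.sqrt_nonneg _)
    linarith
end

section
/- Let z be a random vector in R^p with i.i.d. mean-zero unit-variance coordinates having fourth moment ν_4, and let γ_i = A^T u_i for vectors u_i and a matrix A with Σ = A A^T, where ⟨γ_i, γ_j⟩ = λ_i δ_{ij} (Kronecker delta) for indices i in a set S and j in S^c. Define L = Σ_{i∈S} Σ_{j∈S^c} (ρ_{ij}/(λ_i - λ_j)) · ⟨γ_i, z⟩⟨γ_j, z⟩ for real coefficients ρ_{ij}. Then E[L] = 0 and E[L²] = Σ_{i∈S} Σ_{j∈S^c} ρ_{ij}² λ_i λ_j/(λ_i - λ_j)² + (ν_4 - 3) Σ_{m=1}^p ( Σ_{i∈S} Σ_{j∈S^c} ρ_{ij} γ_{im} γ_{jm}/(λ_i - λ_j) )². -/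
open Matrix BigOperators

open MeasureTheory ProbabilityTheory


lemma indep_prod_integral {Ω : Type} [MeasurableSpace Ω] (μ : Measure Ω) [IsProbabilityMeasure μ]
    {ι : Type*} (g : ι → Ω → ℝ) (hmeas : ∀ i, Measurable (g i))
    (hindep : iIndepFun g μ) (hint : ∀ i, Integrable (g i) μ)
    (s : Finset ι) :
    Integrable (fun ω => ∏ i ∈ s, g i ω) μ ∧
      (∫ ω, ∏ i ∈ s, g i ω ∂μ) = ∏ i ∈ s, ∫ ω, g i ω ∂μ := by
  classical
  induction s using Finset.cons_induction with
  | empty => simp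
  | cons i s hi ih =>
    have hind : IndepFun (g i) (fun ω => ∏ j ∈ s, g j ω) μ := by
      have h := (hindep.indepFun_finsetProd_of_notMem hmeas hi).symm
      simpa [Finset.prod_fn] using h
    have hintprod := ih.1
    have h1 : Integrable (fun ω => g i ω * ∏ j ∈ s, g j ω) μ :=
      hind.integrable_mul (hint i) hintprod
    constructor
    · simpa [Finset.prod_insert hi] using h1
    · simp only [Finset.prod_cons, Finset.prod_insert hi]
      rw [← ih.2]
      have h2 := hind.integral_mul_eq_mul_integral (hint i).aestronglyMeasurable hintprod.aestronglyMeasurable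
      simpa using h2

def expnt {p : ℕ} (a b c d : Fin p) : Fin p → ℕ := fun m =>
  (if a = m then 1 else 0) + (if b = m then 1 else 0)
    + (if c = m then 1 else 0) + (if d = m then 1 else 0)

lemma expnt_le {p : ℕ} (a b c d m : Fin p) : expnt a b c d m ≤ 4 := by
  simp only [expnt]; split_ifs <;> omega

lemma single_rep {p : ℕ} (a : Fin p) (f : Fin p → ℝ) :
    (∏ m, f m ^ (if a = m then 1 else 0)) = f a := by
  simp [pow_ite, Finset.prod_ite_eq]

lemma expnt_rep {p : ℕ} (a b c d : Fin p) (f : Fin p → ℝ) :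
    f a * f b * f c * f d = ∏ m, f m ^ expnt a b c d m := by
  simp only [expnt, pow_add, Finset.prod_mul_distrib, single_rep]

lemma quad_moment {p : ℕ} {Ω : Type} [MeasurableSpace Ω]
    (μ : Measure Ω) [IsProbabilityMeasure μ]
    (z : Fin p → Ω → ℝ) (hmeas : ∀ m, Measurable (z m))
    (hindep : iIndepFun z μ)
    (hint : ∀ m, Integrable (fun ω => (z m ω)^4) μ)
    (hmean : ∀ m, ∫ ω, z m ω ∂μ = 0)
    (hvar : ∀ m, ∫ ω, (z m ω)^2 ∂μ = 1)
    (ν4 : ℝ) (hmom4 : ∀ m, ∫ ω, (z m ω)^4 ∂μ = ν4)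
    (a b c d : Fin p) :
    Integrable (fun ω => z a ω * z b ω * z c ω * z d ω) μ ∧
    (∫ ω, z a ω * z b ω * z c ω * z d ω ∂μ) =
      (if a = b then (1:ℝ) else 0) * (if c = d then 1 else 0)
      + (if a = c then 1 else 0) * (if b = d then 1 else 0)
      + (if a = d then 1 else 0) * (if b = c then 1 else 0)
      + (ν4 - 3) * (if a = b ∧ a = c ∧ a = d then 1 else 0) := by
  classical
  -- integrability of powers up to 4
  have hintk : ∀ m k, k ≤ 4 → Integrable (fun ω => z m ω ^ k) μ := by
    intro m k hk
    apply Integrable.mono' ((integrable_const (1:ℝ)).add (hint m))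
    · exact ((hmeas m).pow_const k).aestronglyMeasurable
    · filter_upwards with ω
      simp only [Pi.add_apply]
      rw [Real.norm_eq_abs, abs_pow]
      have h4 : (0:ℝ) ≤ z m ω ^ 4 := by positivity
      rcases le_or_gt (|z m ω|) 1 with h | h
      · have h1 : |z m ω| ^ k ≤ 1 := pow_le_one₀ (abs_nonneg _) h
        linarith
      · have h1 : |z m ω| ^ k ≤ |z m ω| ^ 4 := pow_le_pow_right₀ h.le hk
        have h2 : |z m ω| ^ 4 = z m ω ^ 4 := by
          rw [← abs_pow, abs_of_nonneg (by positivity)]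
        linarith
  have hindep' : iIndepFun
      (fun m ω => z m ω ^ expnt a b c d m) μ :=
    hindep.comp (fun m x => x ^ expnt a b c d m) (fun m => measurable_id.pow_const _)
  have key := indep_prod_integral μ (fun m ω => z m ω ^ expnt a b c d m)
    (fun m => (hmeas m).pow_const _) hindep'
    (fun m => hintk m _ (expnt_le a b c d m)) Finset.univ
  have hrep : (fun ω => z a ω * z b ω * z c ω * z d ω)
      = fun ω => ∏ m, z m ω ^ expnt a b c d m := by
    funext ω; exact expnt_rep a b c d (fun m => z m ω)
  refine ⟨hrep ▸ key.1, ?_⟩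
  have heq : (∫ ω, z a ω * z b ω * z c ω * z d ω ∂μ)
      = ∏ m, ∫ ω, z m ω ^ expnt a b c d m ∂μ := by
    rw [show (∫ ω, z a ω * z b ω * z c ω * z d ω ∂μ)
        = ∫ ω, ∏ m, z m ω ^ expnt a b c d m ∂μ from by rw [← hrep]]
    exact key.2
  rw [heq]
  -- helper facts about single-index moments
  have hF0 : ∀ m, expnt a b c d m = 0 → (∫ ω, z m ω ^ expnt a b c d m ∂μ) = 1 := by
    intro m h; rw [h]; simp
  have hF1 : ∀ m, expnt a b c d m = 1 → (∫ ω, z m ω ^ expnt a b c d m ∂μ) = 0 := by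
    intro m h; rw [h]; simpa using hmean m
  have hF2 : ∀ m, expnt a b c d m = 2 → (∫ ω, z m ω ^ expnt a b c d m ∂μ) = 1 := by
    intro m h; rw [h]; exact hvar m
  have hF4 : ∀ m, expnt a b c d m = 4 → (∫ ω, z m ω ^ expnt a b c d m ∂μ) = ν4 := by
    intro m h; rw [h]; exact hmom4 m
  have hzero : ∀ x : Fin p, expnt a b c d x = 1
      → (∏ m, ∫ ω, z m ω ^ expnt a b c d m ∂μ) = 0 := fun x hx =>
    Finset.prod_eq_zero (Finset.mem_univ x) (hF1 x hx)
  by_cases hab : a = b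
  · subst hab
    by_cases hcd : c = d
    · subst hcd
      by_cases hac : a = c
      · subst hac
        rw [Finset.prod_eq_single a
          (fun m _ hma => hF0 m (by simp [expnt, Ne.symm hma]))
          (fun h => absurd (Finset.mem_univ a) h),
          hF4 a (by simp [expnt])]
        norm_num
      · rw [Finset.prod_eq_one (fun m _ => ?_)]
        · simp [hac]
        · by_cases hma : m = a
          · subst hma; exact hF2 m (by simp [expnt, Ne.symm hac])
          · by_cases hmc : m = c
            · subst hmc; exact hF2 m (by simp [expnt, hac])
            · exact hF0 m (by simp [expnt, Ne.symm hma, Ne.symm hmc])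
    · by_cases hac : a = c
      · subst hac
        rw [hzero d (by simp [expnt, hcd])]
        simp [hcd]
      · rw [hzero c (by simp [expnt, hac, Ne.symm hcd])]
        simp [hac, hcd]
  · by_cases hcd : c = d
    · subst hcd
      by_cases hac : a = c
      · subst hac
        rw [hzero b (by simp [expnt, hab])]
        simp [hab, Ne.symm hab]
      · rw [hzero a (by simp [expnt, Ne.symm hab, Ne.symm hac])]
        simp [hab, hac]
    · by_cases hac : a = c
      · subst hac
        by_cases hbd : b = d
        · subst hbd
          rw [Finset.prod_eq_one (fun m _ => ?_)]
          · simp [hab]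
          · by_cases hma : m = a
            · subst hma; exact hF2 m (by simp [expnt, Ne.symm hab])
            · by_cases hmb : m = b
              · subst hmb; exact hF2 m (by simp [expnt, hab])
              · exact hF0 m (by simp [expnt, Ne.symm hma, Ne.symm hmb])
        · rw [hzero b (by simp [expnt, hab, Ne.symm hbd])]
          simp [hab, hbd, Ne.symm hab]
      · by_cases had : a = d
        · subst had
          by_cases hbc : b = c
          · subst hbc
            rw [Finset.prod_eq_one (fun m _ => ?_)]
            · simp [hab, Ne.symm hab]
            · by_cases hma : m = a
              · subst hma; exact hF2 m (by simp [expnt, Ne.symm hab])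
              · by_cases hmb : m = b
                · subst hmb; exact hF2 m (by simp [expnt, hab])
                · exact hF0 m (by simp [expnt, Ne.symm hma, Ne.symm hmb])
          · rw [hzero b (by simp [expnt, hab, Ne.symm hbc])]
            simp [hab, hac, hbc]
        · rw [hzero a (by simp [expnt, Ne.symm hab, Ne.symm hac, Ne.symm had])]
          simp [hab, hac, had]


lemma sum4_swap {α β γ' δ : Type*} (A : Finset α) (B : Finset β) (C : Finset γ') (D : Finset δ)
    (F : α → β → γ' → δ → ℝ) :
    (∑ m ∈ A, ∑ n ∈ B, ∑ i ∈ C, ∑ j ∈ D, F m n i j)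
      = ∑ i ∈ C, ∑ j ∈ D, ∑ m ∈ A, ∑ n ∈ B, F m n i j := by
  have h1 : ∀ m, (∑ n ∈ B, ∑ i ∈ C, ∑ j ∈ D, F m n i j)
      = ∑ i ∈ C, ∑ n ∈ B, ∑ j ∈ D, F m n i j := fun m => Finset.sum_comm
  simp only [h1]
  rw [Finset.sum_comm]
  have h2 : ∀ i m, (∑ n ∈ B, ∑ j ∈ D, F m n i j)
      = ∑ j ∈ D, ∑ n ∈ B, F m n i j := fun i m => Finset.sum_comm
  simp only [h2]
  have h3 : ∀ i, (∑ m ∈ A, ∑ j ∈ D, ∑ n ∈ B, F m n i j)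
      = ∑ j ∈ D, ∑ m ∈ A, ∑ n ∈ B, F m n i j := fun i => Finset.sum_comm
  simp only [h3]

lemma prod_factor {α β : Type*} (A : Finset α) (B : Finset β) (u x : α → ℝ) (v y : β → ℝ) :
    (∑ m ∈ A, ∑ n ∈ B, (u m * v n) * (x m * y n))
      = (∑ m ∈ A, u m * x m) * (∑ n ∈ B, v n * y n) := by
  rw [Finset.sum_mul_sum]
  exact Finset.sum_congr rfl fun m _ => Finset.sum_congr rfl fun n _ => by ring

lemma contract {p : ℕ} (S T : Finset (Fin p)) (c : Fin p → Fin p → ℝ) (γ : Fin p → Fin p → ℝ)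
    (x y : Fin p → ℝ) :
    (∑ m : Fin p, ∑ n : Fin p,
        (∑ i ∈ S, ∑ j ∈ T, c i j * (γ i m * γ j n)) * (x m * y n))
      = ∑ i ∈ S, ∑ j ∈ T, c i j * ((∑ m, γ i m * x m) * (∑ n, γ j n * y n)) := by
  have step : ∀ m n : Fin p,
      (∑ i ∈ S, ∑ j ∈ T, c i j * (γ i m * γ j n)) * (x m * y n)
        = ∑ i ∈ S, ∑ j ∈ T, (c i j * (γ i m * γ j n)) * (x m * y n) := by
    intro m n
    rw [Finset.sum_mul]
    exact Finset.sum_congr rfl fun i _ => Finset.sum_mul _ _ _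
  simp only [step]
  rw [sum4_swap]
  refine Finset.sum_congr rfl fun i _ => Finset.sum_congr rfl fun j _ => ?_
  have : ∀ m n : Fin p, (c i j * (γ i m * γ j n)) * (x m * y n)
      = c i j * ((γ i m * x m) * (γ j n * y n)) := fun m n => by ring
  simp only [this, ← Finset.mul_sum]
  congr 1
  rw [Finset.sum_mul]


lemma int_pow {Ω : Type} [MeasurableSpace Ω] {μ : Measure Ω} [IsProbabilityMeasure μ]
    {f : Ω → ℝ} (hmeas : Measurable f) (hint : Integrable (fun ω => f ω ^ 4) μ)
    {k : ℕ} (hk : k ≤ 4) : Integrable (fun ω => f ω ^ k) μ := by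
  apply Integrable.mono' ((integrable_const (1:ℝ)).add hint)
  · exact (hmeas.pow_const k).aestronglyMeasurable
  · filter_upwards with ω
    simp only [Pi.add_apply]
    rw [Real.norm_eq_abs, abs_pow]
    have h4 : (0:ℝ) ≤ f ω ^ 4 := by positivity
    rcases le_or_gt (|f ω|) 1 with h | h
    · have h1 : |f ω| ^ k ≤ 1 := pow_le_one₀ (abs_nonneg _) h
      linarith
    · have h1 : |f ω| ^ k ≤ |f ω| ^ 4 := pow_le_pow_right₀ h.le hk
      have h2 : |f ω| ^ 4 = f ω ^ 4 := by
        rw [← abs_pow, abs_of_nonneg (by positivity)]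
      linarith

lemma pair_moment {p : ℕ} {Ω : Type} [MeasurableSpace Ω]
    (μ : Measure Ω) [IsProbabilityMeasure μ]
    (z : Fin p → Ω → ℝ) (hmeas : ∀ m, Measurable (z m))
    (hindep : iIndepFun z μ)
    (hint : ∀ m, Integrable (fun ω => (z m ω)^4) μ)
    (hmean : ∀ m, ∫ ω, z m ω ∂μ = 0)
    (hvar : ∀ m, ∫ ω, (z m ω)^2 ∂μ = 1)
    (m n : Fin p) :
    Integrable (fun ω => z m ω * z n ω) μ ∧
      (∫ ω, z m ω * z n ω ∂μ) = if m = n then 1 else 0 := by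
  have int1 : ∀ a : Fin p, Integrable (z a) μ := fun a => by
    simpa using int_pow (hmeas a) (hint a) (k := 1) (by norm_num)
  by_cases hmn : m = n
  · subst hmn
    constructor
    · simpa [pow_two] using int_pow (hmeas m) (hint m) (k := 2) (by norm_num)
    · rw [if_pos rfl, ← hvar m]
      apply integral_congr_ae
      filter_upwards with ω
      exact (pow_two (z m ω)).symm
  · have hind : IndepFun (z m) (z n) μ := hindep.indepFun hmn
    constructor
    · exact hind.integrable_mul (int1 m) (int1 n)
    · rw [if_neg hmn]
      have h := hind.integral_mul_eq_mul_integral (int1 m).aestronglyMeasurable (int1 n).aestronglyMeasurable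
      have h2 : (∫ ω, z m ω * z n ω ∂μ) = ∫ ω, (z m * z n) ω ∂μ := rfl
      rw [h2, h, hmean m, hmean n, mul_zero]


lemma collapse_pair {α : Type*} [Fintype α] [DecidableEq α] (f : α → α → ℝ) (a b : α) :
    (∑ r : α × α, f r.1 r.2 * ((if a = r.1 then (1:ℝ) else 0) * (if b = r.2 then 1 else 0)))
      = f a b := by
  rw [Fintype.sum_prod_type]
  have h1 : ∀ r1 r2 : α, f r1 r2 * ((if a = r1 then (1:ℝ) else 0) * (if b = r2 then 1 else 0))
      = if b = r2 then (if a = r1 then f r1 r2 else 0) else 0 := by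
    intro r1 r2; split_ifs <;> simp
  simp only [h1]
  simp only [Finset.sum_ite_eq, Finset.mem_univ, if_true]

lemma collapse_pair' {α : Type*} [Fintype α] [DecidableEq α] (f : α → α → ℝ) (a b : α) :
    (∑ r : α × α, f r.1 r.2 * ((if a = r.2 then (1:ℝ) else 0) * (if b = r.1 then 1 else 0)))
      = f b a := by
  rw [Fintype.sum_prod_type]
  have h1 : ∀ r1 r2 : α, f r1 r2 * ((if a = r2 then (1:ℝ) else 0) * (if b = r1 then 1 else 0))
      = if a = r2 then (if b = r1 then f r1 r2 else 0) else 0 := by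
    intro r1 r2; split_ifs <;> simp
  simp only [h1]
  simp only [Finset.sum_ite_eq, Finset.mem_univ, if_true]

lemma collapse_quad {α : Type*} [Fintype α] [DecidableEq α] (κ : ℝ) (f : α → α → ℝ) (a b : α) :
    (∑ r : α × α, f r.1 r.2 * (κ * (if a = b ∧ a = r.1 ∧ a = r.2 then (1:ℝ) else 0)))
      = if a = b then κ * f a a else 0 := by
  rw [Fintype.sum_prod_type]
  have h1 : ∀ r1 r2 : α, f r1 r2 * (κ * (if a = b ∧ a = r1 ∧ a = r2 then (1:ℝ) else 0))
      = if a = r2 then (if a = r1 then (if a = b then κ * f r1 r2 else 0) else 0) else 0 := by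
    intro r1 r2
    by_cases hb : a = b <;> by_cases h1 : a = r1 <;> by_cases h2 : a = r2 <;>
      simp [hb, h1, h2, mul_comm] <;> split_ifs <;> simp_all
  simp only [h1]
  simp only [Finset.sum_ite_eq, Finset.mem_univ, if_true]

/-- Variance computation of Lemma S6: with ⟨γ_i, γ_j⟩ = λ_i δ_{ij} and
L = Σ_{i∈S} Σ_{j∈Sᶜ} (ρ_{ij}/(λ_i-λ_j)) ⟨γ_i,z⟩⟨γ_j,z⟩, one has E[L] = 0 and the
stated formula for E[L²]. -/
theorem stmt11 {p : ℕ} {Ω : Type} [MeasurableSpace Ω]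
    (μ : Measure Ω) [IsProbabilityMeasure μ]
    (z : Fin p → Ω → ℝ) (hmeas : ∀ m, Measurable (z m))
    (hindep : iIndepFun z μ)
    (hint : ∀ m, Integrable (fun ω => (z m ω)^4) μ)
    (hmean : ∀ m, ∫ ω, z m ω ∂μ = 0)
    (hvar : ∀ m, ∫ ω, (z m ω)^2 ∂μ = 1)
    (ν4 : ℝ) (hmom4 : ∀ m, ∫ ω, (z m ω)^4 ∂μ = ν4)
    (S : Finset (Fin p)) (lam : Fin p → ℝ) (γ : Fin p → Fin p → ℝ)
    (ρ : Fin p → Fin p → ℝ)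
    (horth : ∀ i j, (γ i) ⬝ᵥ (γ j) = if i = j then lam i else 0)
    (hlt : ∀ i ∈ S, ∀ j ∈ Sᶜ, lam j < lam i)
    (L : Ω → ℝ)
    (hL : ∀ ω, L ω = ∑ i ∈ S, ∑ j ∈ Sᶜ,
      (ρ i j / (lam i - lam j)) * (((γ i) ⬝ᵥ fun m => z m ω) * ((γ j) ⬝ᵥ fun m => z m ω))) :
    (∫ ω, L ω ∂μ) = 0 ∧
    (∫ ω, (L ω)^2 ∂μ)
      = (∑ i ∈ S, ∑ j ∈ Sᶜ, (ρ i j)^2 * lam i * lam j / (lam i - lam j)^2)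
        + (ν4 - 3) * ∑ m : Fin p,
            (∑ i ∈ S, ∑ j ∈ Sᶜ, ρ i j * γ i m * γ j m / (lam i - lam j))^2 := by
  classical
  have hne : ∀ i ∈ S, ∀ j ∈ Sᶜ, i ≠ j := fun i hi j hj h =>
    (Finset.mem_compl.mp hj) (h ▸ hi)
  have hd0 : ∀ i ∈ S, ∀ j ∈ Sᶜ, lam i - lam j ≠ 0 := fun i hi j hj =>
    sub_ne_zero_of_ne (ne_of_gt (hlt i hi j hj))
  have hdot : ∀ i i' : Fin p, (∑ m, γ i m * γ i' m) = if i = i' then lam i else 0 :=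
    fun i i' => horth i i'
  set c : Fin p → Fin p → ℝ := fun i j => ρ i j / (lam i - lam j) with hc
  set B : Fin p → Fin p → ℝ :=
    fun m n => ∑ i ∈ S, ∑ j ∈ Sᶜ, c i j * (γ i m * γ j n) with hB
  -- pointwise representation of L
  have hLB : ∀ ω, L ω = ∑ m, ∑ n, B m n * (z m ω * z n ω) := by
    intro ω
    rw [hL]
    rw [show (∑ m, ∑ n, B m n * (z m ω * z n ω))
        = ∑ i ∈ S, ∑ j ∈ Sᶜ, c i j * ((∑ m, γ i m * z m ω) * (∑ n, γ j n * z n ω)) from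
      contract S Sᶜ c γ (fun m => z m ω) (fun n => z n ω)]
    rfl
  -- trace of B vanishes
  have hBtr : (∑ m, B m m) = 0 := by
    have hBd : ∀ m, B m m = ∑ i ∈ S, ∑ j ∈ Sᶜ, c i j * (γ i m * γ j m) := fun m => rfl
    simp only [hBd]
    rw [Finset.sum_comm]
    refine Finset.sum_eq_zero fun i hi => ?_
    rw [Finset.sum_comm]
    refine Finset.sum_eq_zero fun j hj => ?_
    rw [← Finset.mul_sum, hdot i j, if_neg (hne i hi j hj), mul_zero]
  -- contraction identities
  have hcontr : ∀ i' ∈ S, ∀ j' ∈ Sᶜ,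
      (∑ m, ∑ n, B m n * (γ i' m * γ j' n)) = c i' j' * (lam i' * lam j') := by
    intro i' hi' j' hj'
    rw [show (∑ m, ∑ n, B m n * (γ i' m * γ j' n))
        = ∑ i ∈ S, ∑ j ∈ Sᶜ, c i j * ((∑ m, γ i m * γ i' m) * (∑ n, γ j n * γ j' n)) from
      contract S Sᶜ c γ (γ i') (γ j')]
    rw [Finset.sum_eq_single_of_mem i' hi'
      (fun i _ hii' => Finset.sum_eq_zero fun j _ => by
        rw [hdot i i', if_neg hii', zero_mul, mul_zero])]
    rw [Finset.sum_eq_single_of_mem j' hj'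
      (fun j _ hjj' => by rw [hdot j j', if_neg hjj', mul_zero, mul_zero])]
    rw [hdot i' i', if_pos rfl, hdot j' j', if_pos rfl]
  have hcontr2 : ∀ i' ∈ S, ∀ j' ∈ Sᶜ,
      (∑ m, ∑ n, B m n * (γ j' m * γ i' n)) = 0 := by
    intro i' hi' j' hj'
    rw [show (∑ m, ∑ n, B m n * (γ j' m * γ i' n))
        = ∑ i ∈ S, ∑ j ∈ Sᶜ, c i j * ((∑ m, γ i m * γ j' m) * (∑ n, γ j n * γ i' n)) from
      contract S Sᶜ c γ (γ j') (γ i')]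
    refine Finset.sum_eq_zero fun i hi => Finset.sum_eq_zero fun j hj => ?_
    rw [hdot i j', if_neg (hne i hi j' hj'), zero_mul, mul_zero]
  -- quadratic contractions
  have hB2 : (∑ m, ∑ n, B m n * B m n)
      = ∑ i ∈ S, ∑ j ∈ Sᶜ, c i j * (c i j * (lam i * lam j)) := by
    have expand : ∀ m n, B m n * B m n
        = ∑ i' ∈ S, ∑ j' ∈ Sᶜ, c i' j' * (B m n * (γ i' m * γ j' n)) := by
      intro m n
      calc B m n * B m n
          = B m n * ∑ i' ∈ S, ∑ j' ∈ Sᶜ, c i' j' * (γ i' m * γ j' n) := rfl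
        _ = ∑ i' ∈ S, ∑ j' ∈ Sᶜ, c i' j' * (B m n * (γ i' m * γ j' n)) := by
            rw [Finset.mul_sum]
            exact Finset.sum_congr rfl fun i' _ => by
              rw [Finset.mul_sum]
              exact Finset.sum_congr rfl fun j' _ => by ring
    simp only [expand]
    rw [sum4_swap Finset.univ Finset.univ S Sᶜ
      (fun m n i' j' => c i' j' * (B m n * (γ i' m * γ j' n)))]
    refine Finset.sum_congr rfl fun i' hi' => Finset.sum_congr rfl fun j' hj' => ?_
    simp only [← Finset.mul_sum]
    rw [hcontr i' hi' j' hj']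
  have hB3 : (∑ m, ∑ n, B m n * B n m) = 0 := by
    have expand : ∀ m n, B m n * B n m
        = ∑ i' ∈ S, ∑ j' ∈ Sᶜ, c i' j' * (B m n * (γ j' m * γ i' n)) := by
      intro m n
      calc B m n * B n m
          = B m n * ∑ i' ∈ S, ∑ j' ∈ Sᶜ, c i' j' * (γ i' n * γ j' m) := rfl
        _ = ∑ i' ∈ S, ∑ j' ∈ Sᶜ, c i' j' * (B m n * (γ j' m * γ i' n)) := by
            rw [Finset.mul_sum]
            exact Finset.sum_congr rfl fun i' _ => by
              rw [Finset.mul_sum]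
              exact Finset.sum_congr rfl fun j' _ => by ring
    simp only [expand]
    rw [sum4_swap Finset.univ Finset.univ S Sᶜ
      (fun m n i' j' => c i' j' * (B m n * (γ j' m * γ i' n)))]
    refine Finset.sum_eq_zero fun i' hi' => Finset.sum_eq_zero fun j' hj' => ?_
    simp only [← Finset.mul_sum]
    rw [hcontr2 i' hi' j' hj', mul_zero]
  -- E[L] = 0
  have hpair := fun m n => pair_moment μ z hmeas hindep hint hmean hvar m n
  have hintLterm : ∀ (m n : Fin p), Integrable (fun ω => B m n * (z m ω * z n ω)) μ :=
    fun m n => ((hpair m n).1).const_mul _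
  have hEL : (∫ ω, L ω ∂μ) = 0 := by
    have hre : L = fun ω => ∑ m, ∑ n, B m n * (z m ω * z n ω) := funext hLB
    rw [hre]
    rw [integral_finset_sum _ (fun m _ => integrable_finset_sum _ (fun n _ => hintLterm m n))]
    have hinner : ∀ m : Fin p,
        (∫ ω, ∑ n, B m n * (z m ω * z n ω) ∂μ) = B m m := by
      intro m
      rw [integral_finset_sum _ (fun n _ => hintLterm m n)]
      have : ∀ n : Fin p, (∫ ω, B m n * (z m ω * z n ω) ∂μ)
          = B m n * (if m = n then 1 else 0) := by
        intro n
        rw [integral_const_mul, (hpair m n).2]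
      simp only [this, mul_ite, mul_one, mul_zero, Finset.sum_ite_eq,
        Finset.mem_univ, if_true]
    simp only [hinner]
    exact hBtr
  refine ⟨hEL, ?_⟩
  have hcv : ∀ i j, c i j = ρ i j / (lam i - lam j) := fun i j => rfl
  have hBv : ∀ m n : Fin p, B m n = ∑ i ∈ S, ∑ j ∈ Sᶜ, c i j * (γ i m * γ j n) :=
    fun m n => rfl
  have hLq : ∀ ω, L ω = ∑ q : Fin p × Fin p, B q.1 q.2 * (z q.1 ω * z q.2 ω) := by
    intro ω
    rw [hLB ω]
    exact (Fintype.sum_prod_type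
      (f := fun q : Fin p × Fin p => B q.1 q.2 * (z q.1 ω * z q.2 ω))).symm
  have quad := fun (a b c' d : Fin p) =>
    quad_moment μ z hmeas hindep hint hmean hvar ν4 hmom4 a b c' d
  have hterm : ∀ q r : Fin p × Fin p,
      (fun ω => B q.1 q.2 * (z q.1 ω * z q.2 ω) * (B r.1 r.2 * (z r.1 ω * z r.2 ω)))
        = fun ω => B q.1 q.2 * B r.1 r.2 * (z q.1 ω * z q.2 ω * z r.1 ω * z r.2 ω) := by
    intro q r; funext ω; ring
  have hintterm : ∀ q r : Fin p × Fin p, Integrable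
      (fun ω => B q.1 q.2 * (z q.1 ω * z q.2 ω) * (B r.1 r.2 * (z r.1 ω * z r.2 ω))) μ := by
    intro q r
    rw [hterm q r]
    exact ((quad q.1 q.2 r.1 r.2).1).const_mul _
  have hL2 : ∀ ω, (L ω)^2 = ∑ q : Fin p × Fin p, ∑ r : Fin p × Fin p,
      B q.1 q.2 * (z q.1 ω * z q.2 ω) * (B r.1 r.2 * (z r.1 ω * z r.2 ω)) := by
    intro ω
    rw [pow_two, hLq ω, Finset.sum_mul_sum]
  have hIL2 : (∫ ω, (L ω)^2 ∂μ) = ∑ q : Fin p × Fin p, ∑ r : Fin p × Fin p,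
      B q.1 q.2 * B r.1 r.2 *
        ((if q.1 = q.2 then (1:ℝ) else 0) * (if r.1 = r.2 then 1 else 0)
         + (if q.1 = r.1 then 1 else 0) * (if q.2 = r.2 then 1 else 0)
         + (if q.1 = r.2 then 1 else 0) * (if q.2 = r.1 then 1 else 0)
         + (ν4 - 3) * (if q.1 = q.2 ∧ q.1 = r.1 ∧ q.1 = r.2 then 1 else 0)) := by
    simp only [hL2]
    rw [integral_finset_sum _ (fun q _ => integrable_finset_sum _ (fun r _ => hintterm q r))]
    refine Finset.sum_congr rfl fun q _ => ?_
    rw [integral_finset_sum _ (fun r _ => hintterm q r)]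
    refine Finset.sum_congr rfl fun r _ => ?_
    rw [hterm q r]
    rw [integral_const_mul, (quad q.1 q.2 r.1 r.2).2]
  rw [hIL2]
  have ediag : (∑ q : Fin p × Fin p, B q.1 q.2 * (if q.1 = q.2 then (1:ℝ) else 0)) = 0 := by
    rw [show (∑ q : Fin p × Fin p, B q.1 q.2 * (if q.1 = q.2 then (1:ℝ) else 0))
        = ∑ m : Fin p, ∑ n : Fin p, B m n * (if m = n then (1:ℝ) else 0) from
      Fintype.sum_prod_type (f := fun q : Fin p × Fin p => B q.1 q.2 * (if q.1 = q.2 then (1:ℝ) else 0))]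
    simp only [mul_ite, mul_one, mul_zero, Finset.sum_ite_eq, Finset.mem_univ, if_true]
    exact hBtr
  have hsum2 : (∑ q : Fin p × Fin p, B q.1 q.2 * B q.1 q.2)
      = ∑ i ∈ S, ∑ j ∈ Sᶜ, c i j * (c i j * (lam i * lam j)) := by
    rw [show (∑ q : Fin p × Fin p, B q.1 q.2 * B q.1 q.2)
        = ∑ m : Fin p, ∑ n : Fin p, B m n * B m n from
      Fintype.sum_prod_type (f := fun q : Fin p × Fin p => B q.1 q.2 * B q.1 q.2)]
    exact hB2
  have hsum3 : (∑ q : Fin p × Fin p, B q.1 q.2 * B q.2 q.1) = 0 := by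
    rw [show (∑ q : Fin p × Fin p, B q.1 q.2 * B q.2 q.1)
        = ∑ m : Fin p, ∑ n : Fin p, B m n * B n m from
      Fintype.sum_prod_type (f := fun q : Fin p × Fin p => B q.1 q.2 * B q.2 q.1)]
    exact hB3
  simp only [mul_add, Finset.sum_add_distrib]
  rw [show (∑ q : Fin p × Fin p, ∑ r : Fin p × Fin p,
        B q.1 q.2 * B r.1 r.2 * ((if q.1 = q.2 then (1:ℝ) else 0) * (if r.1 = r.2 then 1 else 0)))
      = (∑ q : Fin p × Fin p, B q.1 q.2 * (if q.1 = q.2 then (1:ℝ) else 0))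
        * (∑ r : Fin p × Fin p, B r.1 r.2 * (if r.1 = r.2 then (1:ℝ) else 0)) from
    prod_factor Finset.univ Finset.univ _ _ _ _]
  rw [ediag, zero_mul]
  rw [show (∑ q : Fin p × Fin p, ∑ r : Fin p × Fin p,
        B q.1 q.2 * B r.1 r.2 * ((if q.1 = r.1 then (1:ℝ) else 0) * (if q.2 = r.2 then 1 else 0)))
      = ∑ q : Fin p × Fin p, B q.1 q.2 * B q.1 q.2 from
    Finset.sum_congr rfl fun q _ => collapse_pair (fun r1 r2 => B q.1 q.2 * B r1 r2) q.1 q.2]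
  rw [show (∑ q : Fin p × Fin p, ∑ r : Fin p × Fin p,
        B q.1 q.2 * B r.1 r.2 * ((if q.1 = r.2 then (1:ℝ) else 0) * (if q.2 = r.1 then 1 else 0)))
      = ∑ q : Fin p × Fin p, B q.1 q.2 * B q.2 q.1 from
    Finset.sum_congr rfl fun q _ => collapse_pair' (fun r1 r2 => B q.1 q.2 * B r1 r2) q.1 q.2]
  rw [show (∑ q : Fin p × Fin p, ∑ r : Fin p × Fin p,
        B q.1 q.2 * B r.1 r.2 * ((ν4 - 3) * (if q.1 = q.2 ∧ q.1 = r.1 ∧ q.1 = r.2 then (1:ℝ) else 0)))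
      = ∑ q : Fin p × Fin p, (if q.1 = q.2 then (ν4 - 3) * (B q.1 q.2 * B q.1 q.1) else 0) from
    Finset.sum_congr rfl fun q _ =>
      collapse_quad (ν4 - 3) (fun r1 r2 => B q.1 q.2 * B r1 r2) q.1 q.2]
  rw [hsum2, hsum3]
  rw [show (∑ q : Fin p × Fin p, (if q.1 = q.2 then (ν4 - 3) * (B q.1 q.2 * B q.1 q.1) else 0))
      = ∑ m : Fin p, (ν4 - 3) * (B m m * B m m) from by
    rw [show (∑ q : Fin p × Fin p, (if q.1 = q.2 then (ν4 - 3) * (B q.1 q.2 * B q.1 q.1) else 0))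
        = ∑ m : Fin p, ∑ n : Fin p, (if m = n then (ν4 - 3) * (B m n * B m m) else 0) from
      Fintype.sum_prod_type (f := fun q : Fin p × Fin p =>
        (if q.1 = q.2 then (ν4 - 3) * (B q.1 q.2 * B q.1 q.1) else 0))]
    simp only [Finset.sum_ite_eq, Finset.mem_univ, if_true]]
  have e1 : (∑ i ∈ S, ∑ j ∈ Sᶜ, c i j * (c i j * (lam i * lam j)))
      = ∑ i ∈ S, ∑ j ∈ Sᶜ, (ρ i j)^2 * lam i * lam j / (lam i - lam j)^2 :=
    Finset.sum_congr rfl fun i hi => Finset.sum_congr rfl fun j hj => by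
      rw [hcv]
      have h := hd0 i hi j hj
      field_simp
  have e2 : (∑ m : Fin p, (ν4 - 3) * (B m m * B m m))
      = (ν4 - 3) * ∑ m : Fin p,
          (∑ i ∈ S, ∑ j ∈ Sᶜ, ρ i j * γ i m * γ j m / (lam i - lam j))^2 := by
    rw [← Finset.mul_sum]
    congr 1
    refine Finset.sum_congr rfl fun m _ => ?_
    have hBm : B m m = ∑ i ∈ S, ∑ j ∈ Sᶜ, ρ i j * γ i m * γ j m / (lam i - lam j) := by
      rw [hBv]
      exact Finset.sum_congr rfl fun i _ => Finset.sum_congr rfl fun j _ => by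
        rw [hcv]; ring
    rw [hBm, pow_two]
  rw [e1, e2]
  ring
end
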